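/- MLE for the Rademacher exponential family e(B^k) and sample x1,…,xn ∈ Q_k exists if and only if for every j = 1,…,k the set {r_j(x1),…,r_j(xn)} equals {−1, 1}. Equivalently, {x1,…,xn} is a set of uniqueness for (B^k)_+ if and only if for each coordinate j both values ±1 are attained by the sample. -/

import Mathlib

open Real Finset

noncomputable section AuxMLE

/-- Rademacher function. -/
def rad (k : ℕ) : Fin k → (Fin k → Bool) → ℝ := fun j χ => if χ j then (1:ℝ) else -1

/-- log-likelihood. -/
def lfun {k : ℕ} (n : ℕ) (μ : (Fin k → Bool) → ℝ) (x : Fin n → (Fin k → Bool))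
    (φ : (Fin k → Bool) → ℝ) : ℝ :=
  (∑ i, φ (x i)) - n * Real.log (∑ χ, Real.exp (φ χ) * μ χ)

variable {k n : ℕ}

lemma Zpos (μ : (Fin k → Bool) → ℝ) (hμ : ∀ χ, 0 < μ χ) (φ : (Fin k → Bool) → ℝ) :
    0 < ∑ χ, Real.exp (φ χ) * μ χ :=
  Finset.sum_pos (fun χ _ => mul_pos (Real.exp_pos _) (hμ χ)) ⟨fun _ => false, Finset.mem_univ _⟩

lemma prod_exp_eq (μ : (Fin k → Bool) → ℝ) (x : Fin n → (Fin k → Bool))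
    (φ : (Fin k → Bool) → ℝ) :
    (∏ i, Real.exp (φ (x i) - Real.log (∑ χ, Real.exp (φ χ) * μ χ))) =
      Real.exp (lfun n μ x φ) := by
  rw [← Real.exp_sum]
  congr 1
  rw [Finset.sum_sub_distrib, Finset.sum_const, Finset.card_univ, Fintype.card_fin, lfun,
    nsmul_eq_mul]

lemma lfun_shift (μ : (Fin k → Bool) → ℝ) (hμ : ∀ χ, 0 < μ χ) (x : Fin n → (Fin k → Bool))
    (a : ℝ) (φ : (Fin k → Bool) → ℝ) :
    lfun n μ x (fun χ => a + φ χ) = lfun n μ x φ := by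
  have hZ : (0:ℝ) < ∑ χ, Real.exp (φ χ) * μ χ := Zpos μ hμ φ
  have h1 : (∑ χ, Real.exp (a + φ χ) * μ χ) = Real.exp a * ∑ χ, Real.exp (φ χ) * μ χ := by
    rw [Finset.mul_sum]
    refine Finset.sum_congr rfl fun χ _ => ?_
    rw [Real.exp_add]; ring
  simp only [lfun, h1, Real.log_mul (Real.exp_ne_zero a) (ne_of_gt hZ), Real.log_exp,
    Finset.sum_add_distrib, Finset.sum_const, Finset.card_univ, Fintype.card_fin,
    nsmul_eq_mul]
  ring

lemma mem_Bk_iff (φ : (Fin k → Bool) → ℝ) :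
    φ ∈ Submodule.span ℝ ({(fun _ => (1:ℝ) : (Fin k → Bool) → ℝ)} ∪ Set.range (rad k)) ↔
      ∃ a : ℝ, ∃ c : Fin k → ℝ, ∀ χ, φ χ = a + ∑ j, c j * rad k j χ := by
  constructor
  · intro h
    rw [Submodule.span_union, Submodule.mem_sup] at h
    obtain ⟨y, hy, z, hz, rfl⟩ := h
    rw [Submodule.mem_span_singleton] at hy
    obtain ⟨a, rfl⟩ := hy
    rw [Submodule.mem_span_range_iff_exists_fun ℝ] at hz
    obtain ⟨c, rfl⟩ := hz
    exact ⟨a, c, fun χ => by simp [Finset.sum_apply]⟩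
  · rintro ⟨a, c, hφ⟩
    have hrep : φ = a • (fun _ => (1:ℝ)) + ∑ j, c j • rad k j := by
      funext χ
      simp [hφ χ, Finset.sum_apply]
    rw [hrep]
    exact add_mem (Submodule.smul_mem _ _ (Submodule.subset_span (Or.inl rfl)))
      (Submodule.sum_mem _ fun j _ =>
        Submodule.smul_mem _ _ (Submodule.subset_span (Or.inr ⟨j, rfl⟩)))
lemma coercive (μ : (Fin k → Bool) → ℝ) (hμ : ∀ χ, 0 < μ χ) (x : Fin n → (Fin k → Bool))
    (hx : ∀ j, (∃ i, x i j = true) ∧ (∃ i, x i j = false)) (c : Fin k → ℝ) :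
    lfun n μ x (fun χ => ∑ j, c j * rad k j χ) ≤
      n * (∑ χ, |Real.log (μ χ)|) - 2 * ∑ j, |c j| := by
  set χs : Fin k → Bool := fun j => decide (0 ≤ c j) with hχs
  have hφχs : (∑ j, c j * rad k j χs) = ∑ j, |c j| := by
    refine Finset.sum_congr rfl fun j _ => ?_
    by_cases h : 0 ≤ c j
    · simp [rad, hχs, h, abs_of_nonneg h]
    · simp [rad, hχs, h, abs_of_neg (not_le.mp h)]
  -- lower bound on log Z
  have hZ1 : Real.exp (∑ j, c j * rad k j χs) * μ χs ≤
      ∑ χ, Real.exp ((fun χ => ∑ j, c j * rad k j χ) χ) * μ χ :=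
    Finset.single_le_sum (f := fun χ => Real.exp (∑ j, c j * rad k j χ) * μ χ)
      (fun χ _ => le_of_lt (mul_pos (Real.exp_pos _) (hμ χ))) (Finset.mem_univ χs)
  have hlogZ : (∑ j, |c j|) + Real.log (μ χs) ≤
      Real.log (∑ χ, Real.exp ((fun χ => ∑ j, c j * rad k j χ) χ) * μ χ) := by
    have := Real.log_le_log (mul_pos (Real.exp_pos _) (hμ χs)) hZ1
    rwa [Real.log_mul (Real.exp_ne_zero _) (ne_of_gt (hμ χs)), Real.log_exp, hφχs] at this
  -- bound on sample sum
  have hS : ∀ j : Fin k, c j * (∑ i, rad k j (x i)) ≤ ((n:ℝ) - 2) * |c j| := by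
    intro j
    obtain ⟨⟨ip, hip⟩, ⟨im, him⟩⟩ := hx j
    have hub : (∑ i, rad k j (x i)) ≤ (n:ℝ) - 2 := by
      have h1 : (∑ i, rad k j (x i)) ≤ ∑ i : Fin n, ((1:ℝ) - if i = im then 2 else 0) := by
        refine Finset.sum_le_sum fun i _ => ?_
        by_cases h : i = im
        · subst h; simp [rad, him]; norm_num
        · simp only [h, if_false, sub_zero, rad]
          split <;> norm_num
      have h2 : (∑ i : Fin n, ((1:ℝ) - if i = im then 2 else 0)) = (n:ℝ) - 2 := by
        rw [Finset.sum_sub_distrib, Finset.sum_const, Finset.card_univ, Fintype.card_fin,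
          Finset.sum_ite_eq' Finset.univ im (fun _ => (2:ℝ))]
        simp
      linarith
    have hlb : -((n:ℝ) - 2) ≤ ∑ i, rad k j (x i) := by
      have h1 : (∑ i : Fin n, (-(1:ℝ) + if i = ip then 2 else 0)) ≤ ∑ i, rad k j (x i) := by
        refine Finset.sum_le_sum fun i _ => ?_
        by_cases h : i = ip
        · subst h; simp [rad, hip]; norm_num
        · simp only [h, if_false, add_zero, rad]
          split <;> norm_num
      have h2 : (∑ i : Fin n, (-(1:ℝ) + if i = ip then 2 else 0)) = -((n:ℝ) - 2) := by
        rw [Finset.sum_add_distrib, Finset.sum_const, Finset.card_univ, Fintype.card_fin,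
          Finset.sum_ite_eq' Finset.univ ip (fun _ => (2:ℝ))]
        simp only [Finset.mem_univ, if_true, nsmul_eq_mul, smul_eq_mul, mul_neg_one]
        ring
      linarith
    calc c j * (∑ i, rad k j (x i)) ≤ |c j * (∑ i, rad k j (x i))| := le_abs_self _
      _ = |c j| * |∑ i, rad k j (x i)| := abs_mul _ _
      _ ≤ |c j| * ((n:ℝ) - 2) :=
          mul_le_mul_of_nonneg_left (abs_le.mpr ⟨hlb, hub⟩) (abs_nonneg _)
      _ = ((n:ℝ) - 2) * |c j| := mul_comm _ _
  have hT : (∑ i, (fun χ => ∑ j, c j * rad k j χ) (x i)) ≤ ((n:ℝ) - 2) * ∑ j, |c j| := by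
    simp only
    rw [Finset.sum_comm, Finset.mul_sum]
    refine Finset.sum_le_sum fun j _ => ?_
    rw [← Finset.mul_sum]
    exact hS j
  have hμs : -Real.log (μ χs) ≤ ∑ χ, |Real.log (μ χ)| := by
    have h1 : -Real.log (μ χs) ≤ |Real.log (μ χs)| := neg_le_abs _
    have h2 : |Real.log (μ χs)| ≤ ∑ χ, |Real.log (μ χ)| :=
      Finset.single_le_sum (f := fun χ => |Real.log (μ χ)|) (fun χ _ => abs_nonneg _)
        (Finset.mem_univ χs)
    linarith
  have hA : (0:ℝ) ≤ ∑ j, |c j| := Finset.sum_nonneg fun j _ => abs_nonneg _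
  have hn0 : (0:ℝ) ≤ (n:ℝ) := Nat.cast_nonneg n
  have h3 : (n:ℝ) * ((∑ j, |c j|) + Real.log (μ χs)) ≤
      (n:ℝ) * Real.log (∑ χ, Real.exp ((fun χ => ∑ j, c j * rad k j χ) χ) * μ χ) :=
    mul_le_mul_of_nonneg_left hlogZ hn0
  have h4 : (n:ℝ) * (-Real.log (μ χs)) ≤ (n:ℝ) * ∑ χ, |Real.log (μ χ)| :=
    mul_le_mul_of_nonneg_left hμs hn0
  unfold lfun
  nlinarith [hT, h3, h4, hA]
lemma cont_g (μ : (Fin k → Bool) → ℝ) (hμ : ∀ χ, 0 < μ χ) (x : Fin n → (Fin k → Bool)) :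
    Continuous (fun c : Fin k → ℝ => lfun n μ x (fun χ => ∑ j, c j * rad k j χ)) := by
  unfold lfun
  apply Continuous.sub
  · exact continuous_finset_sum _ fun i _ =>
      continuous_finset_sum _ fun j _ => (continuous_apply j).mul continuous_const
  · apply Continuous.mul continuous_const
    have hZ : Continuous fun c : Fin k → ℝ =>
        ∑ χ, Real.exp (∑ j, c j * rad k j χ) * μ χ :=
      continuous_finset_sum _ fun χ _ =>
        (Real.continuous_exp.comp
          (continuous_finset_sum _ fun j _ => (continuous_apply j).mul continuous_const)).mul
          continuous_const
    rw [continuous_iff_continuousAt]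
    intro c
    have h1 : ContinuousAt Real.log (∑ χ, Real.exp (∑ j, c j * rad k j χ) * μ χ) :=
      Real.continuousAt_log (ne_of_gt (Zpos μ hμ (fun χ => ∑ j, c j * rad k j χ)))
    exact ContinuousAt.comp (f := fun c : Fin k → ℝ => ∑ χ, Real.exp (∑ j, c j * rad k j χ) * μ χ)
      h1 hZ.continuousAt

lemma exists_max (μ : (Fin k → Bool) → ℝ) (hμ : ∀ χ, 0 < μ χ) (x : Fin n → (Fin k → Bool))
    (hx : ∀ j, (∃ i, x i j = true) ∧ (∃ i, x i j = false)) :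
    ∃ cs : Fin k → ℝ, ∀ c : Fin k → ℝ,
      lfun n μ x (fun χ => ∑ j, c j * rad k j χ) ≤
        lfun n μ x (fun χ => ∑ j, cs j * rad k j χ) := by
  set g : (Fin k → ℝ) → ℝ := fun c => lfun n μ x (fun χ => ∑ j, c j * rad k j χ) with hg
  set M : ℝ := n * (∑ χ, |Real.log (μ χ)|) with hM
  set R : ℝ := max 0 ((M - g 0) / 2) with hR
  have hR0 : (0:ℝ) ≤ R := le_max_left _ _
  have h0mem : (0 : Fin k → ℝ) ∈ Metric.closedBall (0 : Fin k → ℝ) R := by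
    simp [hR0]
  obtain ⟨cs, hcsmem, hcs⟩ := (isCompact_closedBall (0 : Fin k → ℝ) R).exists_isMaxOn
    ⟨0, h0mem⟩ (cont_g μ hμ x).continuousOn
  have hcs' : ∀ c ∈ Metric.closedBall (0 : Fin k → ℝ) R, g c ≤ g cs := hcs
  refine ⟨cs, fun c => ?_⟩
  by_cases hc : c ∈ Metric.closedBall (0 : Fin k → ℝ) R
  · exact hcs' c hc
  · have hnorm : R < ‖c‖ := by
      by_contra h
      exact hc (mem_closedBall_zero_iff.mpr (not_lt.mp h))
    have h1 : ‖c‖ ≤ ∑ j, |c j| := by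
      refine (pi_norm_le_iff_of_nonneg (Finset.sum_nonneg fun j _ => abs_nonneg _)).mpr
        fun j => ?_
      rw [Real.norm_eq_abs]
      exact Finset.single_le_sum (f := fun l => |c l|) (fun l _ => abs_nonneg _)
        (Finset.mem_univ j)
    have h2 : g c ≤ M - 2 * ∑ j, |c j| := coercive μ hμ x hx c
    have h3 : M - 2 * R ≤ g 0 := by
      have : (M - g 0) / 2 ≤ R := le_max_right _ _
      linarith
    have h4 : g 0 ≤ g cs := hcs' 0 h0mem
    linarith
lemma increase (hn : 0 < n) (μ : (Fin k → Bool) → ℝ) (hμ : ∀ χ, 0 < μ χ)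
    (x : Fin n → (Fin k → Bool)) (j : Fin k) (ε : ℝ) (hεε : ε * ε = 1)
    (hsame : ∀ i, rad k j (x i) = ε) (χ0 : Fin k → Bool) (hχ0 : ε * rad k j χ0 < 1)
    (φ0 : (Fin k → Bool) → ℝ) :
    lfun n μ x φ0 < lfun n μ x (fun χ => φ0 χ + ε * rad k j χ) := by
  have hε1 : ε ≤ 1 := by nlinarith [sq_nonneg (ε - 1)]
  have hε2 : -1 ≤ ε := by nlinarith [sq_nonneg (ε + 1)]
  set Z0 : ℝ := ∑ χ, Real.exp (φ0 χ) * μ χ with hZ0def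
  have hZ0 : 0 < Z0 := Zpos μ hμ φ0
  set Z1 : ℝ := ∑ χ, Real.exp ((fun χ => φ0 χ + ε * rad k j χ) χ) * μ χ with hZ1def
  have hZ1 : 0 < Z1 := Zpos μ hμ _
  have hbound : ∀ χ : Fin k → Bool, ε * rad k j χ ≤ 1 := by
    intro χ
    unfold rad
    split <;> nlinarith
  have hZlt : Z1 < Real.exp 1 * Z0 := by
    rw [hZ1def, hZ0def, Finset.mul_sum]
    refine Finset.sum_lt_sum (fun χ _ => ?_) ⟨χ0, Finset.mem_univ _, ?_⟩
    · show Real.exp (φ0 χ + ε * rad k j χ) * μ χ ≤ Real.exp 1 * (Real.exp (φ0 χ) * μ χ)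
      rw [← mul_assoc, ← Real.exp_add]
      exact mul_le_mul_of_nonneg_right
        (Real.exp_le_exp.mpr (by linarith [hbound χ])) (hμ χ).le
    · show Real.exp (φ0 χ0 + ε * rad k j χ0) * μ χ0 < Real.exp 1 * (Real.exp (φ0 χ0) * μ χ0)
      rw [← mul_assoc, ← Real.exp_add]
      exact mul_lt_mul_of_pos_right
        (Real.exp_lt_exp.mpr (by linarith)) (hμ χ0)
  have hlog : Real.log Z1 < 1 + Real.log Z0 := by
    have h2 := Real.log_lt_log hZ1 hZlt
    rwa [Real.log_mul (Real.exp_ne_zero 1) (ne_of_gt hZ0), Real.log_exp] at h2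
  have hsumx : (∑ i, ((fun χ => φ0 χ + ε * rad k j χ) (x i))) = (∑ i, φ0 (x i)) + n := by
    simp only
    rw [Finset.sum_add_distrib]
    congr 1
    have : ∀ i : Fin n, ε * rad k j (x i) = 1 := fun i => by rw [hsame i]; exact hεε
    rw [Finset.sum_congr rfl fun i _ => this i]
    simp
  unfold lfun
  rw [hsumx, ← hZ0def, ← hZ1def]
  have hn' : (0:ℝ) < n := by exact_mod_cast hn
  nlinarith [mul_lt_mul_of_pos_left hlog hn']
lemma flip_eval (a : ℝ) (c : Fin k → ℝ) (j : Fin k) (χ : Fin k → Bool) :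
    a + ∑ l, c l * rad k l (Function.update χ j (!χ j)) =
      (a + ∑ l, c l * rad k l χ) - 2 * (c j * rad k j χ) := by
  have hrad : ∀ l, rad k l (Function.update χ j (!χ j)) =
      if l = j then -rad k l χ else rad k l χ := by
    intro l
    by_cases h : l = j
    · subst h
      simp only [rad, Function.update_self, if_pos rfl]
      cases χ l <;> simp
    · simp [rad, Function.update_of_ne h, h]
  have hsum : (∑ l, c l * rad k l (Function.update χ j (!χ j))) =
      ∑ l, (c l * rad k l χ - if l = j then 2 * (c l * rad k l χ) else 0) := by
    refine Finset.sum_congr rfl fun l _ => ?_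
    rw [hrad l]
    by_cases h : l = j <;> simp [h] <;> ring
  rw [hsum, Finset.sum_sub_distrib,
    Finset.sum_ite_eq' Finset.univ j (fun l => 2 * (c l * rad k l χ))]
  simp only [Finset.mem_univ, if_true]
  ring

lemma prod_le_prod_iff_lfun (μ : (Fin k → Bool) → ℝ) (x : Fin n → (Fin k → Bool))
    (φ ψ : (Fin k → Bool) → ℝ) :
    (∏ i, Real.exp (φ (x i) - Real.log (∑ χ, Real.exp (φ χ) * μ χ))) ≤
      (∏ i, Real.exp (ψ (x i) - Real.log (∑ χ, Real.exp (ψ χ) * μ χ))) ↔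
    lfun n μ x φ ≤ lfun n μ x ψ := by
  rw [prod_exp_eq, prod_exp_eq, Real.exp_le_exp]

end AuxMLE

theorem stmt_10 (k n : ℕ) (hn : 0 < n)
    (μ : (Fin k → Bool) → ℝ) (hμ : ∀ χ, 0 < μ χ)
    (x : Fin n → (Fin k → Bool))
    (Bk : Submodule ℝ ((Fin k → Bool) → ℝ))
    (hBk : Bk = Submodule.span ℝ
      ({(fun _ => (1:ℝ) : (Fin k → Bool) → ℝ)} ∪
        Set.range (fun j : Fin k => fun χ : Fin k → Bool => if χ j then (1:ℝ) else -1))) :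
    ((∃ φ0 ∈ Bk, ∀ φ ∈ Bk,
      (∏ i, Real.exp (φ (x i) - Real.log (∑ χ, Real.exp (φ χ) * μ χ))) ≤
        ∏ i, Real.exp (φ0 (x i) - Real.log (∑ χ, Real.exp (φ0 χ) * μ χ)))
      ↔ ∀ j, (∃ i, x i j = true) ∧ (∃ i, x i j = false)) ∧
    ((∀ φ ∈ Bk, (∀ χ, 0 ≤ φ χ) → (∀ i, φ (x i) = 0) → φ = 0)
      ↔ ∀ j, (∃ i, x i j = true) ∧ (∃ i, x i j = false)) := by
  have hBmem : ∀ φ : (Fin k → Bool) → ℝ,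
      φ ∈ Bk ↔ ∃ a : ℝ, ∃ c : Fin k → ℝ, ∀ χ, φ χ = a + ∑ j, c j * rad k j χ := by
    intro φ; rw [hBk]; exact mem_Bk_iff φ
  have hradmem : ∀ j : Fin k, rad k j ∈ Bk := by
    intro j
    rw [hBk]
    exact Submodule.subset_span (Or.inr ⟨j, rfl⟩)
  constructor
  · constructor
    · -- existence → both values
      rintro ⟨φ0, hφ0, hmax⟩ j
      by_contra hj
      rw [not_and_or] at hj
      push_neg at hj
      have key : ∀ ε : ℝ, ε * ε = 1 → (∀ i, rad k j (x i) = ε) →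
          ∀ χ0 : Fin k → Bool, ε * rad k j χ0 < 1 → False := by
        intro ε hεε hsame χ0 hχ0
        have hmem : (fun χ => φ0 χ + ε * rad k j χ) ∈ Bk := by
          have h1 := add_mem hφ0 (Submodule.smul_mem Bk ε (hradmem j))
          convert h1 using 1
          funext χ; rfl
        have hlt := increase hn μ hμ x j ε hεε hsame χ0 hχ0 φ0
        have hle := (prod_le_prod_iff_lfun μ x _ φ0).mp (hmax _ hmem)
        linarith
      rcases hj with hj | hj
      · -- never true: all rad = -1
        refine key (-1) (by norm_num) (fun i => ?_) (fun _ => true) ?_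
        · have : x i j = false := Bool.not_eq_true _ |>.mp (hj i)
          simp [rad, this]
        · simp [rad]
      · -- never false: all rad = 1
        refine key 1 (by norm_num) (fun i => ?_) (fun _ => false) ?_
        · have : x i j = true := Bool.not_eq_false _ |>.mp (hj i)
          simp [rad, this]
        · simp [rad]
    · -- both values → existence
      intro hx
      obtain ⟨cs, hcs⟩ := exists_max μ hμ x hx
      refine ⟨fun χ => ∑ j, cs j * rad k j χ, ?_, ?_⟩
      · exact (hBmem _).mpr ⟨0, cs, fun χ => by simp⟩
      · intro φ hφ
        obtain ⟨a, c, hac⟩ := (hBmem φ).mp hφ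
        refine (prod_le_prod_iff_lfun μ x φ (fun χ => ∑ j, cs j * rad k j χ)).mpr ?_
        have hφeq : φ = fun χ => a + ∑ j, c j * rad k j χ := funext hac
        rw [hφeq, lfun_shift μ hμ x a]
        exact hcs c
  · constructor
    · -- uniqueness → both values
      intro hu j
      by_contra hj
      rw [not_and_or] at hj
      push_neg at hj
      rcases hj with hj | hj
      · -- never true
        set φ : (Fin k → Bool) → ℝ := fun χ => 1 + rad k j χ with hφdef
        have hmem : φ ∈ Bk := by
          refine (hBmem φ).mpr ⟨1, fun l => if l = j then 1 else 0, fun χ => ?_⟩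
          simp [hφdef, ite_mul, Finset.sum_ite_eq']
        have hpos : ∀ χ, 0 ≤ φ χ := by
          intro χ
          simp only [hφdef, rad]
          split <;> norm_num
        have hzero : ∀ i, φ (x i) = 0 := by
          intro i
          have hxi : x i j = false := Bool.not_eq_true _ |>.mp (hj i)
          simp [hφdef, rad, hxi]
        have h0 := hu φ hmem hpos hzero
        have h2 := congrFun h0 (fun _ => true)
        simp [hφdef, rad] at h2
      · -- never false
        set φ : (Fin k → Bool) → ℝ := fun χ => 1 - rad k j χ with hφdef
        have hmem : φ ∈ Bk := by
          refine (hBmem φ).mpr ⟨1, fun l => if l = j then -1 else 0, fun χ => ?_⟩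
          simp [hφdef, ite_mul, Finset.sum_ite_eq']
          ring
        have hpos : ∀ χ, 0 ≤ φ χ := by
          intro χ
          simp only [hφdef, rad]
          split <;> norm_num
        have hzero : ∀ i, φ (x i) = 0 := by
          intro i
          have hxi : x i j = true := Bool.not_eq_false _ |>.mp (hj i)
          simp [hφdef, rad, hxi]
        have h0 := hu φ hmem hpos hzero
        have h2 := congrFun h0 (fun _ => false)
        simp [hφdef, rad] at h2
    · -- both values → uniqueness
      intro hx φ hφ hpos hzero
      obtain ⟨a, c, hac⟩ := (hBmem φ).mp hφ
      have hcj : ∀ j, c j = 0 := by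
        intro j
        obtain ⟨⟨ip, hip⟩, ⟨im, him⟩⟩ := hx j
        have h1 : (0:ℝ) ≤ φ (Function.update (x ip) j (!x ip j)) := hpos _
        rw [hac, flip_eval, ← hac, hzero ip] at h1
        have hr1 : rad k j (x ip) = 1 := by simp [rad, hip]
        rw [hr1] at h1
        have h2 : (0:ℝ) ≤ φ (Function.update (x im) j (!x im j)) := hpos _
        rw [hac, flip_eval, ← hac, hzero im] at h2
        have hr2 : rad k j (x im) = -1 := by simp [rad, him]
        rw [hr2] at h2
        nlinarith
      have ha : a = 0 := by
        have h3 := hzero ⟨0, hn⟩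
        rw [hac] at h3
        simpa [hcj] using h3
      funext χ
      rw [hac χ]
      simp [hcj, ha]
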